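/- For β ∈ (0, ∞) and N > 0, with φ_N(x) = (1 + β + |x|)^β for |x| < N and φ_N(x) = (1 + β + N)^β for |x| ≥ N, there exists a constant C_β depending only on β such that for all x ∈ ℝ, φ_N(x) · ∫_ℝ e^{-|x-y|} / φ_N(y) dy ≤ C_β. -/

import Mathlib

open Real MeasureTheory Set

/-- The truncated algebraic weight. -/
noncomputable def phiWeight (β N x : ℝ) : ℝ :=
  if |x| < N then (1 + β + |x|) ^ β else (1 + β + N) ^ β

lemma phiWeight_eq (β N x : ℝ) : phiWeight β N x = (1 + β + min |x| N) ^ β := by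
  unfold phiWeight
  split_ifs with h
  · rw [min_eq_left h.le]
  · rw [min_eq_right (le_of_not_gt h)]

lemma integrable_exp_neg_abs : Integrable (fun y : ℝ => Real.exp (-|y|)) := by
  have h1 : IntegrableOn (fun y : ℝ => Real.exp (-|y|)) (Iic 0) := by
    refine (integrableOn_exp_Iic 0).congr_fun (fun y hy => ?_) measurableSet_Iic
    rw [abs_of_nonpos hy, neg_neg]
  have h2 : IntegrableOn (fun y : ℝ => Real.exp (-|y|)) (Ioi 0) := by
    refine (exp_neg_integrableOn_Ioi 0 one_pos).congr_fun (fun y hy => ?_) measurableSet_Ioi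
    rw [abs_of_pos hy]; simp only [neg_one_mul]
  have h := h1.union h2
  rw [Iic_union_Ioi] at h
  exact integrableOn_univ.1 h

lemma integrable_exp_neg_mul_abs {c : ℝ} (hc : 0 < c) :
    Integrable (fun y : ℝ => Real.exp (-(c * |y|))) := by
  have h := integrable_exp_neg_abs.comp_mul_left' hc.ne'
  refine h.congr (Filter.Eventually.of_forall fun y => ?_)
  simp only [abs_mul, abs_of_pos hc]

/-- Pointwise ratio bound. -/
lemma phiWeight_ratio (β N x y : ℝ) (hβ : 0 < β) (hN : 0 < N) :
    phiWeight β N x * (Real.exp (-|x - y|) / phiWeight β N y) ≤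
      Real.exp (-((1 + β)⁻¹ * |x - y|)) := by
  set a := min |x| N with ha_def
  set b := min |y| N with hb_def
  set t := |x - y| with ht_def
  have ha : 0 ≤ a := le_min (abs_nonneg x) hN.le
  have hb : 0 ≤ b := le_min (abs_nonneg y) hN.le
  have ht : 0 ≤ t := abs_nonneg _
  have h1β : (0:ℝ) < 1 + β := by linarith
  have hab : a ≤ b + t := by
    have h1 : |x| ≤ |y| + t := by
      have := abs_sub_abs_le_abs_sub x y
      linarith
    rcases le_total |y| N with h | h
    · calc a ≤ |x| := min_le_left _ _
        _ ≤ |y| + t := h1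
        _ = b + t := by rw [hb_def, min_eq_left h]
    · calc a ≤ N := min_le_right _ _
        _ ≤ b + t := by rw [hb_def, min_eq_right h]; linarith
  have hpos : (0:ℝ) < 1 + β + b := by linarith
  have hapos : (0:ℝ) < 1 + β + a := by linarith
  set s := (1 + β)⁻¹ * t with hs_def
  have hs : 0 ≤ s := mul_nonneg (inv_nonneg.2 h1β.le) ht
  have key : (1 + β + a) ≤ (1 + β + b) * Real.exp s := by
    have h2 : s + 1 ≤ Real.exp s := Real.add_one_le_exp s
    have ht' : (1 + β) * s = t := by
      rw [hs_def, ← mul_assoc, mul_inv_cancel₀ h1β.ne', one_mul]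
    nlinarith [mul_le_mul_of_nonneg_left h2 hpos.le, mul_nonneg hb hs]
  have hr : (1 + β + a) ^ β ≤ (1 + β + b) ^ β * Real.exp (s * β) := by
    have := Real.rpow_le_rpow hapos.le key hβ.le
    rwa [Real.mul_rpow hpos.le (Real.exp_pos s).le, ← Real.exp_mul] at this
  rw [phiWeight_eq, phiWeight_eq, ← ha_def, ← hb_def]
  have hyb : (0:ℝ) < (1 + β + b) ^ β := Real.rpow_pos_of_pos hpos β
  calc (1 + β + a) ^ β * (Real.exp (-t) / (1 + β + b) ^ β)
      ≤ ((1 + β + b) ^ β * Real.exp (s * β)) * (Real.exp (-t) / (1 + β + b) ^ β) := by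
        apply mul_le_mul_of_nonneg_right hr
        positivity
    _ = Real.exp (s * β + -t) := by
        rw [Real.exp_add]
        field_simp
    _ = Real.exp (-s) := by
        congr 1
        rw [hs_def]
        field_simp
        ring

lemma phiWeight_pos (β N y : ℝ) (hβ : 0 < β) (hN : 0 < N) : 0 < phiWeight β N y := by
  rw [phiWeight_eq]
  have : 0 ≤ min |y| N := le_min (abs_nonneg y) hN.le
  have : (0:ℝ) < 1 + β + min |y| N := by linarith
  exact Real.rpow_pos_of_pos this β

/-- Lemma 2.11 (second part): there is a constant `C_β`, depending only on `β`
(not on `N`), such that `φ_N(x) ∫ e^{-|x-y|}/φ_N(y) dy ≤ C_β` for all `x`. -/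
theorem phiWeight_convolution_bound (β : ℝ) (hβ : 0 < β) :
    ∃ Cβ : ℝ, ∀ N : ℝ, 0 < N → ∀ x : ℝ,
      phiWeight β N x * (∫ y : ℝ, Real.exp (-|x - y|) / phiWeight β N y) ≤ Cβ := by
  have h1β : (0:ℝ) < 1 + β := by linarith
  have hc : (0:ℝ) < (1 + β)⁻¹ := inv_pos.2 h1β
  refine ⟨∫ y : ℝ, Real.exp (-((1 + β)⁻¹ * |y|)), fun N hN x => ?_⟩
  have hint : Integrable (fun y : ℝ => Real.exp (-((1 + β)⁻¹ * |x - y|))) := by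
    have h := (integrable_exp_neg_mul_abs hc).comp_sub_right x
    refine h.congr (Filter.Eventually.of_forall fun y => ?_)
    simp only [abs_sub_comm y x]
  rw [← integral_const_mul]
  have hmono : (∫ y : ℝ, phiWeight β N x * (Real.exp (-|x - y|) / phiWeight β N y)) ≤
      ∫ y : ℝ, Real.exp (-((1 + β)⁻¹ * |x - y|)) := by
    refine integral_mono_of_nonneg (Filter.Eventually.of_forall fun y => ?_) hint
      (Filter.Eventually.of_forall fun y => phiWeight_ratio β N x y hβ hN)
    have h1 := (phiWeight_pos β N x hβ hN).le
    have h2 := (phiWeight_pos β N y hβ hN).le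
    positivity
  refine hmono.trans (le_of_eq ?_)
  calc (∫ y : ℝ, Real.exp (-((1 + β)⁻¹ * |x - y|)))
      = ∫ y : ℝ, Real.exp (-((1 + β)⁻¹ * |y - x|)) := by
        congr 1; ext y; rw [abs_sub_comm]
    _ = ∫ y : ℝ, Real.exp (-((1 + β)⁻¹ * |y|)) :=
        integral_sub_right_eq_self (fun y : ℝ => Real.exp (-((1 + β)⁻¹ * |y|))) x
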